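/- Let (X_n) be an expander of degree d and conductance c > 0. Then there is a constant c₀ ≥ 0 such that for every n and every 1-Lipschitz map f : X_n → ℓ² (with respect to the graph metric) satisfying ∑_{x∈X_n} f(x) = 0, one has (1/|X_n|) ∑_{x∈X_n} ‖f(x)‖² ≤ c₀/2. -/

import Mathlib

open Classical in
/-- The degree of a vertex `v` in a finite simple graph. -/
noncomputable def gdeg {V : Type*} [Fintype V] (G : SimpleGraph V) (v : V) : ℕ :=
  (Finset.univ.filter fun w => G.Adj v w).card

open Classical in
/-- The boundary `∂A = {x : dist(x, A) = 1}` of a set of vertices `A`: the set of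
vertices not in `A` that are adjacent to a vertex of `A`. -/
noncomputable def graphBoundary {V : Type*} [Fintype V] (G : SimpleGraph V)
    (A : Finset V) : Finset V :=
  Finset.univ.filter fun x => x ∉ A ∧ ∃ a ∈ A, G.Adj x a

/-- An expander of degree `d` and conductance `c`: a sequence of finite connected
`d`-regular graphs whose cardinalities tend to infinity, such that every set `A`
of at most half the vertices satisfies `|∂A| ≥ c·|A|`. -/
structure Expander (d : ℕ) (c : ℝ) where
  V : ℕ → Type
  [fintype : ∀ n, Fintype (V n)]
  G : ∀ n, SimpleGraph (V n)
  connected : ∀ n, (G n).Connected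
  regular : ∀ (n : ℕ) (v : V n), gdeg (G n) v = d
  card_tendsto : Filter.Tendsto (fun n => Fintype.card (V n)) Filter.atTop Filter.atTop
  expansion : ∀ (n : ℕ) (A : Finset (V n)),
    (A.card : ℝ) ≤ (Fintype.card (V n) : ℝ) / 2 →
    c * A.card ≤ ((graphBoundary (G n) A).card : ℝ)

attribute [instance] Expander.fintype

open Classical in
/-- The finset of unordered pairs of distinct vertices. -/
noncomputable def offDiagPairs (V : Type*) [Fintype V] : Finset (Sym2 V) :=
  Finset.univ.filter fun e => ¬ e.IsDiag

/-- The squared distance `‖f x − f y‖²` as a function of the unordered pair `{x, y}`. -/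
noncomputable def sqDistFun {V H : Type*} [NormedAddCommGroup H] (f : V → H) :
    Sym2 V → ℝ :=
  Sym2.lift ⟨fun x y => ‖f x - f y‖ ^ 2, fun x y => by show ‖f x - f y‖ ^ 2 = ‖f y - f x‖ ^ 2; rw [norm_sub_rev]⟩

/-- `∑_{{x,y} ∈ P} ‖f x − f y‖²`, summed over unordered pairs of distinct vertices. -/
noncomputable def pairSqSum {V : Type*} [Fintype V] {H : Type*} [NormedAddCommGroup H]
    (f : V → H) : ℝ :=
  ∑ e ∈ offDiagPairs V, sqDistFun f e

open Classical in
/-- `∑_{{x,y} ∈ E} ‖f x − f y‖²`, summed over the edges of `G`. -/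
noncomputable def edgeSqSum {V : Type*} [Fintype V] (G : SimpleGraph V)
    {H : Type*} [NormedAddCommGroup H] (f : V → H) : ℝ :=
  ∑ e ∈ G.edgeFinset, sqDistFun f e

open Classical in
/-- The number of edges of a finite simple graph. -/
noncomputable def edgeCount {V : Type*} [Fintype V] (G : SimpleGraph V) : ℕ :=
  G.edgeFinset.card


open Finset

lemma lp2_summable_sq (x : lp (fun _ : ℕ => ℝ) 2) : Summable fun k => (x k)^2 := by
  have h1 := (lp.memℓp x).summable (by norm_num : 0 < (2:ENNReal).toReal)
  refine h1.congr fun k => ?_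
  simp [Real.norm_eq_abs]

lemma lp2_norm_sq (x : lp (fun _ : ℕ => ℝ) 2) : ‖x‖^2 = ∑' k, (x k)^2 := by
  have h1 := lp.norm_rpow_eq_tsum (p := 2) (by norm_num) x
  norm_num at h1
  simpa [sq_abs] using h1

lemma lp2_sum_coord {V : Type} [Fintype V] (f : V → lp (fun _ : ℕ => ℝ) 2)
    (h : ∑ v, f v = 0) (k : ℕ) : ∑ v, f v k = 0 := by
  have h1 := congrFun (lp.coeFn_sum f Finset.univ) k
  rw [h] at h1
  simpa [Finset.sum_apply] using h1.symm

lemma summable_finset_sum' {γ β : Type*} {s : Finset γ} {f : γ → β → ℝ}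
    (hf : ∀ i ∈ s, Summable (f i)) : Summable fun b => ∑ i ∈ s, f i b :=
  (hasSum_sum fun i hi => (hf i hi).hasSum).summable



noncomputable def absDiffFun {V : Type*} (h : V → ℝ) : Sym2 V → ℝ :=
  Sym2.lift ⟨fun x y => |h x - h y|, fun x y => abs_sub_comm _ _⟩

lemma sorted_equiv_exists {V : Type*} [Fintype V] (h : V → ℝ) :
    ∃ e : Fin (Fintype.card V) ≃ V, Antitone (h ∘ e) := by
  classical
  let e₀ : Fin (Fintype.card V) ≃ V := (Fintype.equivFin V).symm
  let σ := Tuple.sort (fun i => -h (e₀ i))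
  refine ⟨σ.trans e₀, ?_⟩
  intro i j hij
  have := Tuple.monotone_sort (fun i => -h (e₀ i)) hij
  simpa [σ, Function.comp] using this

lemma l1_coarea {V : Type} [Fintype V] [DecidableEq V] (G : SimpleGraph V)
    [DecidableRel G.Adj] [Fintype G.edgeSet] {c : ℝ} (hc : 0 ≤ c)
    (hexp : ∀ A : Finset V, (A.card : ℝ) ≤ (Fintype.card V : ℝ) / 2 →
      c * A.card ≤ ((graphBoundary G A).card : ℝ))
    (h : V → ℝ) (hnn : ∀ v, 0 ≤ h v)
    (hsupp : ((univ.filter fun v => h v ≠ 0).card : ℝ) ≤ (Fintype.card V : ℝ) / 2) :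
    c * ∑ v, h v ≤ ∑ e ∈ G.edgeFinset, absDiffFun h e := by
  set N := Fintype.card V with hN
  obtain ⟨e, he⟩ := sorted_equiv_exists h
  set w : ℕ → ℝ := fun k => if hk : k < N then h (e ⟨k, hk⟩) else 0 with hw
  have hw_nonneg : ∀ k, 0 ≤ w k := by
    intro k; by_cases hk : k < N <;> simp [hw, hk, hnn]
  have hw_anti : Antitone w := by
    intro i j hij
    by_cases hj : j < N
    · have hi : i < N := lt_of_le_of_lt hij hj
      simp only [hw, dif_pos hi, dif_pos hj]
      exact he (show (⟨i, hi⟩ : Fin N) ≤ ⟨j, hj⟩ from hij)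
    · simp only [hw, dif_neg hj]
      exact hw_nonneg i
  have hwN : w N = 0 := by simp [hw]
  set rank : V → ℕ := fun v => ((e.symm v : Fin N) : ℕ) with hrank
  have hrank_lt : ∀ v, rank v < N := fun v => (e.symm v).isLt
  have h_eq : ∀ v, h v = w (rank v) := by
    intro v
    simp only [hw, hrank, dif_pos (hrank_lt v)]
    congr 1
    rw [dif_pos (e.symm v).isLt]
    exact congrArg h (e.apply_symm_apply v).symm
  have hrank_inj : Function.Injective rank := fun u v huv => by
    have : e.symm u = e.symm v := Fin.val_injective huv
    exact e.symm.injective this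
  set D : ℕ → ℝ := fun k => w k - w (k + 1) with hD
  have hD_nonneg : ∀ k, 0 ≤ D k := fun k => sub_nonneg.2 (hw_anti (Nat.le_succ k))
  have tele : ∀ a b : ℕ, a ≤ b → ∑ k ∈ Ico a b, D k = w a - w b := by
    intro a b hab
    rw [Finset.sum_Ico_eq_sub _ hab, Finset.sum_range_sub' w, Finset.sum_range_sub' w]
    ring
  set B : ℕ → Finset V := fun k => univ.filter fun v => rank v ≤ k with hB
  have hBmem : ∀ k v, v ∈ B k ↔ rank v ≤ k := by intro k v; simp [hB]
  have hBcard : ∀ k, k < N → (B k).card = k + 1 := by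
    intro k hk
    have h1 : B k = (univ.filter fun i : Fin N => (i : ℕ) ≤ k).image e := by
      ext v
      simp only [hBmem, mem_image, mem_filter, mem_univ, true_and]
      constructor
      · intro hv; exact ⟨e.symm v, hv, e.apply_symm_apply v⟩
      · rintro ⟨i, hi, rfl⟩; simpa [hrank] using hi
    rw [h1, Finset.card_image_of_injective _ e.injective]
    have h2 : (univ.filter fun i : Fin N => (i : ℕ) ≤ k).image Fin.val = range (k+1) := by
      ext m
      simp only [mem_image, mem_filter, mem_univ, true_and, mem_range]
      constructor
      · rintro ⟨i, hi, rfl⟩; omega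
      · intro hm; exact ⟨⟨m, by omega⟩, Nat.lt_succ_iff.mp hm, rfl⟩
    have h3 := Finset.card_image_of_injective
      (univ.filter fun i : Fin N => (i : ℕ) ≤ k) Fin.val_injective
    rw [h2, Finset.card_range] at h3
    exact h3.symm
  -- identity 1 : ∑ h = ∑_k D k * (k+1)
  have hIco_filter : ∀ a : ℕ, a < N → (range N).filter (fun k => a ≤ k) = Ico a N := by
    intro a ha; ext k; simp only [mem_filter, mem_range, mem_Ico]; omega
  have id1 : ∑ v, h v = ∑ k ∈ range N, D k * (k + 1 : ℝ) := by
    have step1 : ∀ v, h v = ∑ k ∈ range N, if rank v ≤ k then D k else 0 := by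
      intro v
      rw [← Finset.sum_filter, hIco_filter _ (hrank_lt v), tele _ _ (le_of_lt (hrank_lt v)),
        hwN, sub_zero, h_eq]
    calc ∑ v, h v = ∑ v, ∑ k ∈ range N, if rank v ≤ k then D k else 0 := by
          exact Finset.sum_congr rfl fun v _ => step1 v
      _ = ∑ k ∈ range N, ∑ v, if rank v ≤ k then D k else 0 := Finset.sum_comm
      _ = ∑ k ∈ range N, D k * (k + 1 : ℝ) := by
          refine Finset.sum_congr rfl fun k hk => ?_
          rw [← Finset.sum_filter]
          have : (univ.filter fun v => rank v ≤ k) = B k := rfl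
          rw [this, Finset.sum_const, hBcard k (mem_range.mp hk)]
          push_cast [nsmul_eq_mul]
          ring
  -- crossing indicator
  set crossInd : ℕ → Sym2 V → ℝ := fun k => Sym2.lift
    ⟨fun x y => if (rank x ≤ k ∧ k < rank y) ∨ (rank y ≤ k ∧ k < rank x) then (1:ℝ) else 0,
     fun x y => if_congr (or_comm) rfl rfl⟩ with hcross
  have crossInd01 : ∀ k ex, crossInd k ex = 0 ∨ crossInd k ex = 1 := by
    intro k ex
    induction ex using Sym2.ind with
    | _ x y => simp only [hcross, Sym2.lift_mk]; split_ifs <;> simp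
  have crossInd_nonneg : ∀ k ex, 0 ≤ crossInd k ex := by
    intro k ex; rcases crossInd01 k ex with h' | h' <;> rw [h'] <;> norm_num
  -- per-edge identity
  have edge_id : ∀ x y, G.Adj x y →
      absDiffFun h s(x, y) = ∑ k ∈ range N, D k * crossInd k s(x, y) := by
    have aux : ∀ x y, rank x < rank y →
        absDiffFun h s(x, y) = ∑ k ∈ range N, D k * crossInd k s(x, y) := by
      intro x y hxy
      have hwxy : w (rank y) ≤ w (rank x) := hw_anti (le_of_lt hxy)
      have lhs : absDiffFun h s(x, y) = w (rank x) - w (rank y) := by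
        simp only [absDiffFun, Sym2.lift_mk, h_eq]
        rw [abs_of_nonneg (sub_nonneg.2 hwxy)]
      have rhs : ∀ k, D k * crossInd k s(x, y) =
          if rank x ≤ k ∧ k < rank y then D k else 0 := by
        intro k
        simp only [hcross, Sym2.lift_mk]
        by_cases hk : rank x ≤ k ∧ k < rank y
        · rw [if_pos (Or.inl hk), if_pos hk, mul_one]
        · have : ¬((rank x ≤ k ∧ k < rank y) ∨ (rank y ≤ k ∧ k < rank x)) := by
            rintro (h' | h')
            · exact hk h'
            · omega
          rw [if_neg this, if_neg hk, mul_zero]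
      rw [lhs, Finset.sum_congr rfl fun k _ => rhs k, ← Finset.sum_filter]
      have hfil : (range N).filter (fun k => rank x ≤ k ∧ k < rank y) = Ico (rank x) (rank y) := by
        ext k
        have := hrank_lt y
        simp only [mem_filter, mem_range, mem_Ico]
        omega
      rw [hfil, tele _ _ (le_of_lt hxy)]
    intro x y hadj
    have hne : rank x ≠ rank y := fun hrr => G.ne_of_adj hadj (hrank_inj hrr)
    rcases lt_or_gt_of_ne hne with h' | h'
    · exact aux x y h'
    · have h1 : s(x, y) = s(y, x) := Sym2.eq_swap
      rw [h1]
      exact aux y x h'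
  -- crossing count
  set crossCount : ℕ → ℕ := fun k => (G.edgeFinset.filter fun ex => crossInd k ex ≠ 0).card
    with hcc
  have crossSum : ∀ k, ∑ ex ∈ G.edgeFinset, crossInd k ex = (crossCount k : ℝ) := by
    intro k
    rw [← Finset.sum_filter_ne_zero]
    rw [Finset.sum_congr rfl (fun ex hex => ?_), Finset.sum_const, hcc, nsmul_eq_mul, mul_one]
    rcases crossInd01 k ex with h' | h'
    · exact absurd h' (Finset.mem_filter.mp hex).2
    · exact h'
  -- boundary injects into crossing edges
  have bdry_le : ∀ k, ((graphBoundary G (B k)).card : ℕ) ≤ crossCount k := by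
    intro k
    classical
    apply Finset.card_le_card_of_injOn
      (fun v => if hv : ∃ a, a ∈ B k ∧ G.Adj v a then s(v, hv.choose) else s(v, v))
    · intro v hv
      have hv' : v ∉ B k ∧ ∃ a ∈ B k, G.Adj v a := by
        simpa [graphBoundary] using hv
      have hex : ∃ a, a ∈ B k ∧ G.Adj v a := by
        obtain ⟨a, ha, hadj⟩ := hv'.2; exact ⟨a, ha, hadj⟩
      beta_reduce
      rw [dif_pos hex]
      obtain ⟨ha, hadj⟩ := hex.choose_spec
      rw [Finset.mem_coe, Finset.mem_filter]
      constructor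
      · exact SimpleGraph.mem_edgeFinset.mpr hadj
      · simp only [hcross, Sym2.lift_mk]
        have h1 : rank hex.choose ≤ k := (hBmem k _).mp ha
        have h2 : ¬ rank v ≤ k := fun hh => hv'.1 ((hBmem k v).mpr hh)
        rw [if_pos (Or.inr ⟨h1, by omega⟩)]
        norm_num
    · intro u hu v hv huv
      have hu' : u ∉ B k ∧ ∃ a ∈ B k, G.Adj u a := by simpa [graphBoundary] using hu
      have hv' : v ∉ B k ∧ ∃ a ∈ B k, G.Adj v a := by simpa [graphBoundary] using hv
      have hexu : ∃ a, a ∈ B k ∧ G.Adj u a := by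
        obtain ⟨a, ha, hadj⟩ := hu'.2; exact ⟨a, ha, hadj⟩
      have hexv : ∃ a, a ∈ B k ∧ G.Adj v a := by
        obtain ⟨a, ha, hadj⟩ := hv'.2; exact ⟨a, ha, hadj⟩
      simp only at huv
      rw [dif_pos hexu, dif_pos hexv] at huv
      rcases Sym2.eq_iff.mp huv with ⟨h1, _⟩ | ⟨h1, h2⟩
      · exact h1
      · exfalso
        exact hu'.1 (h1 ▸ hexv.choose_spec.1)
  -- half-size bound when D k ≠ 0
  have half : ∀ k, k < N → D k ≠ 0 → ((B k).card : ℝ) ≤ (N : ℝ) / 2 := by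
    intro k hk hDk
    have hwk : 0 < w k := by
      have h1 : D k ≤ w k := by
        have := hw_nonneg (k+1); simp only [hD]; linarith
      rcases lt_or_eq_of_le (hD_nonneg k) with h' | h'
      · linarith
      · exact absurd h'.symm hDk
    have hsub : B k ⊆ univ.filter fun v => h v ≠ 0 := by
      intro v hvB
      have h1 : w k ≤ h v := by rw [h_eq]; exact hw_anti ((hBmem k v).mp hvB)
      simp only [mem_filter, mem_univ, true_and]
      intro h0
      rw [h0] at h1; linarith
    calc ((B k).card : ℝ) ≤ ((univ.filter fun v => h v ≠ 0).card : ℝ) := by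
          exact_mod_cast Finset.card_le_card hsub
      _ ≤ (N : ℝ) / 2 := hsupp
  -- main chain
  have key : ∀ k ∈ range N, D k * (c * (k + 1 : ℝ)) ≤ D k * (crossCount k : ℝ) := by
    intro k hk
    have hkN := mem_range.mp hk
    by_cases hDk : D k = 0
    · rw [hDk]; ring_nf; exact le_refl _
    · apply mul_le_mul_of_nonneg_left _ (hD_nonneg k)
      have h1 := hexp (B k) (half k hkN hDk)
      rw [hBcard k hkN] at h1
      push_cast at h1 ⊢
      calc c * ((k : ℝ) + 1) ≤ ((graphBoundary G (B k)).card : ℝ) := h1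
        _ ≤ (crossCount k : ℝ) := by exact_mod_cast bdry_le k
  calc c * ∑ v, h v = ∑ k ∈ range N, D k * (c * (k + 1 : ℝ)) := by
        rw [id1, Finset.mul_sum]; exact Finset.sum_congr rfl fun k _ => by ring
    _ ≤ ∑ k ∈ range N, D k * (crossCount k : ℝ) := Finset.sum_le_sum key
    _ = ∑ k ∈ range N, ∑ ex ∈ G.edgeFinset, D k * crossInd k ex := by
        refine Finset.sum_congr rfl fun k _ => ?_
        rw [← Finset.mul_sum, crossSum]
    _ = ∑ ex ∈ G.edgeFinset, ∑ k ∈ range N, D k * crossInd k ex := Finset.sum_comm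
    _ = ∑ ex ∈ G.edgeFinset, absDiffFun h ex := by
        refine Finset.sum_congr rfl fun ex hex => ?_
        induction ex using Sym2.ind with
        | _ x y =>
          exact (edge_id x y (SimpleGraph.mem_edgeFinset.mp hex)).symm

lemma sum_edges_lift {V : Type} [Fintype V] [DecidableEq V] (G : SimpleGraph V)
    [DecidableRel G.Adj] [Fintype G.edgeSet] (F : Sym2 V → ℝ) :
    2 * ∑ ex ∈ G.edgeFinset, F ex = ∑ v, ∑ u ∈ G.neighborFinset v, F s(v, u) := by
  classical
  set P : Finset (V × V) := (univ ×ˢ univ).filter (fun p => G.Adj p.1 p.2) with hP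
  have hmaps : ∀ p ∈ P, Sym2.mk p.1 p.2 ∈ G.edgeFinset := by
    intro p hp
    rw [SimpleGraph.mem_edgeFinset]
    exact (Finset.mem_filter.mp hp).2
  have fiber : ∀ ex ∈ G.edgeFinset,
      ∑ p ∈ P.filter (fun p => Sym2.mk p.1 p.2 = ex), F (Sym2.mk p.1 p.2) = 2 * F ex := by
    intro ex hex
    induction ex using Sym2.ind with
    | _ x y =>
      have hadj : G.Adj x y := SimpleGraph.mem_edgeFinset.mp hex
      have hxy : x ≠ y := G.ne_of_adj hadj
      have hfib : P.filter (fun p => Sym2.mk p.1 p.2 = s(x, y)) = {(x, y), (y, x)} := by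
        ext p
        cases p with
        | mk a b =>
          simp only [Finset.mem_filter, hP, Finset.mem_product, Finset.mem_univ, true_and,
            Finset.mem_insert, Finset.mem_singleton, Prod.mk.injEq]
          constructor
          · rintro ⟨-, hab⟩
            rcases Sym2.eq_iff.mp hab with ⟨h1, h2⟩ | ⟨h1, h2⟩
            · left; exact ⟨h1, h2⟩
            · right; exact ⟨h1, h2⟩
          · rintro (⟨rfl, rfl⟩ | ⟨rfl, rfl⟩)
            · exact ⟨hadj, rfl⟩
            · exact ⟨hadj.symm, Sym2.eq_swap⟩
      rw [hfib]
      rw [Finset.sum_insert (by simp [Prod.ext_iff, hxy]), Finset.sum_singleton]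
      have e1 : (Sym2.mk x y) = s(x, y) := rfl
      have e2 : (Sym2.mk y x) = s(x, y) := Sym2.eq_swap
      rw [e1, e2]; ring
  have lhs : ∑ p ∈ P, F (Sym2.mk p.1 p.2) = 2 * ∑ ex ∈ G.edgeFinset, F ex := by
    rw [← Finset.sum_fiberwise_of_maps_to hmaps (fun p => F (Sym2.mk p.1 p.2))]
    rw [Finset.sum_congr rfl fiber, Finset.mul_sum]
  have rhs : ∑ p ∈ P, F (Sym2.mk p.1 p.2) = ∑ v, ∑ u ∈ G.neighborFinset v, F s(v, u) := by
    rw [hP, Finset.sum_filter, Finset.sum_product]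
    refine Finset.sum_congr rfl fun v _ => ?_
    rw [SimpleGraph.neighborFinset_eq_filter, Finset.sum_filter]
  rw [← lhs, rhs]

lemma edge_double_count {V : Type} [Fintype V] [DecidableEq V] (G : SimpleGraph V)
    [DecidableRel G.Adj] [Fintype G.edgeSet] (q : V → ℝ) :
    ∑ ex ∈ G.edgeFinset, Sym2.lift ⟨fun x y => q x + q y, fun x y => add_comm _ _⟩ ex
      = ∑ v, (G.degree v : ℝ) * q v := by
  classical
  have h1 := sum_edges_lift G (Sym2.lift ⟨fun x y => q x + q y, fun x y => add_comm _ _⟩)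
  simp only [Sym2.lift_mk] at h1
  have h2 : ∀ v, ∑ u ∈ G.neighborFinset v, (q v + q u)
      = (G.degree v : ℝ) * q v + ∑ u ∈ G.neighborFinset v, q u := by
    intro v
    rw [Finset.sum_add_distrib, Finset.sum_const, SimpleGraph.degree, nsmul_eq_mul]
  have h3 : ∑ v, ∑ u ∈ G.neighborFinset v, q u = ∑ v, (G.degree v : ℝ) * q v := by
    have swap : ∀ v, ∑ u ∈ G.neighborFinset v, q u = ∑ u, if G.Adj v u then q u else 0 := by
      intro v
      rw [SimpleGraph.neighborFinset_eq_filter, Finset.sum_filter]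
    rw [Finset.sum_congr rfl fun v _ => swap v, Finset.sum_comm]
    refine Finset.sum_congr rfl fun u _ => ?_
    have : ∀ v, (if G.Adj v u then q u else 0) = if G.Adj u v then q u else 0 := by
      intro v; exact if_congr (G.adj_comm v u) rfl rfl
    rw [Finset.sum_congr rfl fun v _ => this v, ← Finset.sum_filter, Finset.sum_const,
      nsmul_eq_mul]
    congr 2
    rw [SimpleGraph.degree, SimpleGraph.neighborFinset_eq_filter]
  have h4 := Finset.sum_congr rfl fun v (_ : v ∈ (univ : Finset V)) => h2 v
  rw [h4, Finset.sum_add_distrib, h3] at h1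
  linarith


lemma sqDistFun_nonneg {V : Type} (g : V → ℝ) (ex : Sym2 V) : 0 ≤ sqDistFun g ex := by
  induction ex using Sym2.ind with
  | _ x y => simp only [sqDistFun, Sym2.lift_mk]; positivity

lemma l2_poincare {V : Type} [Fintype V] [DecidableEq V] (G : SimpleGraph V)
    [DecidableRel G.Adj] [Fintype G.edgeSet] {c : ℝ} (hc : 0 < c) {d : ℕ}
    (hreg : ∀ v, G.degree v = d)
    (hexp : ∀ A : Finset V, (A.card : ℝ) ≤ (Fintype.card V : ℝ) / 2 →
      c * A.card ≤ ((graphBoundary G A).card : ℝ))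
    (g : V → ℝ) (hsum : ∑ v, g v = 0) :
    c ^ 2 * ∑ v, (g v) ^ 2 ≤ 4 * d * ∑ ex ∈ G.edgeFinset, sqDistFun g ex := by
  set N := Fintype.card V with hN
  have hE_nonneg : 0 ≤ ∑ ex ∈ G.edgeFinset, sqDistFun g ex :=
    Finset.sum_nonneg fun ex _ => sqDistFun_nonneg g ex
  rcases Nat.eq_zero_or_pos N with hN0 | hNpos
  · have : IsEmpty V := Fintype.card_eq_zero_iff.mp hN0
    rw [Finset.univ_eq_empty, Finset.sum_empty, mul_zero]
    positivity
  -- median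
  obtain ⟨e, he⟩ := sorted_equiv_exists g
  set p : ℕ := (N - 1) / 2 with hp
  have hpN : p < N := by omega
  set m : ℝ := g (e ⟨p, hpN⟩) with hm
  have claimA : ((univ.filter fun v => m < g v).card : ℝ) ≤ (N : ℝ) / 2 := by
    have hsub : (univ.filter fun v => m < g v) ⊆
        (univ.filter fun i : Fin N => (i : ℕ) < p).image e := by
      intro v hv
      simp only [mem_filter, mem_univ, true_and, mem_image] at hv ⊢
      refine ⟨e.symm v, ?_, e.apply_symm_apply v⟩
      by_contra hle
      push_neg at hle
      have h1 : (⟨p, hpN⟩ : Fin N) ≤ e.symm v := hle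
      have h2 : g (e (e.symm v)) ≤ g (e ⟨p, hpN⟩) := he h1
      rw [e.apply_symm_apply] at h2
      exact absurd hv (not_lt.mpr h2)
    have h1 : (univ.filter fun v => m < g v).card ≤ p := by
      calc (univ.filter fun v => m < g v).card
          ≤ ((univ.filter fun i : Fin N => (i : ℕ) < p).image e).card :=
            Finset.card_le_card hsub
        _ = (univ.filter fun i : Fin N => (i : ℕ) < p).card :=
            Finset.card_image_of_injective _ e.injective
        _ ≤ p := by
            have himg : (univ.filter fun i : Fin N => (i : ℕ) < p).image Fin.val ⊆ range p := by
              intro a ha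
              simp only [mem_image, mem_filter, mem_univ, true_and, mem_range] at ha ⊢
              obtain ⟨i, hi, rfl⟩ := ha; exact hi
            calc (univ.filter fun i : Fin N => (i : ℕ) < p).card
                = ((univ.filter fun i : Fin N => (i : ℕ) < p).image Fin.val).card :=
                  (Finset.card_image_of_injective _ Fin.val_injective).symm
              _ ≤ (range p).card := Finset.card_le_card himg
              _ = p := Finset.card_range p
    have : (2 : ℕ) * p ≤ N := by omega
    have hcast : ((univ.filter fun v => m < g v).card : ℝ) ≤ (p : ℝ) := by exact_mod_cast h1
    have : (p : ℝ) ≤ (N : ℝ) / 2 := by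
      rw [le_div_iff₀ (by norm_num : (0:ℝ) < 2)]
      exact_mod_cast by omega
    linarith
  have claimB : ((univ.filter fun v => g v < m).card : ℝ) ≤ (N : ℝ) / 2 := by
    have hsub : (univ.filter fun v => g v < m) ⊆
        (univ.filter fun i : Fin N => p < (i : ℕ)).image e := by
      intro v hv
      simp only [mem_filter, mem_univ, true_and, mem_image] at hv ⊢
      refine ⟨e.symm v, ?_, e.apply_symm_apply v⟩
      by_contra hle
      push_neg at hle
      have h1 : e.symm v ≤ (⟨p, hpN⟩ : Fin N) := hle
      have h2 : g (e ⟨p, hpN⟩) ≤ g (e (e.symm v)) := he h1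
      rw [e.apply_symm_apply] at h2
      exact absurd hv (not_lt.mpr h2)
    have h1 : (univ.filter fun v => g v < m).card ≤ N - (p + 1) := by
      calc (univ.filter fun v => g v < m).card
          ≤ ((univ.filter fun i : Fin N => p < (i : ℕ)).image e).card :=
            Finset.card_le_card hsub
        _ = (univ.filter fun i : Fin N => p < (i : ℕ)).card :=
            Finset.card_image_of_injective _ e.injective
        _ ≤ N - (p + 1) := by
            have himg : (univ.filter fun i : Fin N => p < (i : ℕ)).image Fin.val ⊆
                Ico (p + 1) N := by
              intro a ha
              simp only [mem_image, mem_filter, mem_univ, true_and, mem_Ico] at ha ⊢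
              obtain ⟨i, hi, rfl⟩ := ha; exact ⟨hi, i.isLt⟩
            calc (univ.filter fun i : Fin N => p < (i : ℕ)).card
                = ((univ.filter fun i : Fin N => p < (i : ℕ)).image Fin.val).card :=
                  (Finset.card_image_of_injective _ Fin.val_injective).symm
              _ ≤ (Ico (p + 1) N).card := Finset.card_le_card himg
              _ = N - (p + 1) := Nat.card_Ico _ _
    have h2 : (2 : ℕ) * (N - (p + 1)) ≤ N := by omega
    have hcast : ((univ.filter fun v => g v < m).card : ℝ) ≤ ((N - (p+1) : ℕ) : ℝ) := by
      exact_mod_cast h1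
    have : ((N - (p+1) : ℕ) : ℝ) ≤ (N : ℝ) / 2 := by
      rw [le_div_iff₀ (by norm_num : (0:ℝ) < 2)]
      exact_mod_cast by omega
    linarith
  set Eg := ∑ ex ∈ G.edgeFinset, sqDistFun g ex with hEg
  have key : ∀ gp : V → ℝ, (∀ v, 0 ≤ gp v) →
      ((univ.filter fun v => gp v ≠ 0).card : ℝ) ≤ (N : ℝ) / 2 →
      (∀ x y, |gp x - gp y| ≤ |g x - g y|) →
      c ^ 2 * ∑ v, (gp v) ^ 2 ≤ 2 * d * Eg := by
    intro gp hgp hsupp hcontr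
    set S := ∑ v, (gp v) ^ 2 with hS
    have hS_nonneg : 0 ≤ S := Finset.sum_nonneg fun v _ => sq_nonneg _
    have h1 : c * S ≤ ∑ ex ∈ G.edgeFinset, absDiffFun (fun v => (gp v)^2) ex := by
      apply l1_coarea G (le_of_lt hc) hexp _ (fun v => sq_nonneg _)
      have hflt : (univ.filter fun v => (gp v)^2 ≠ 0) = (univ.filter fun v => gp v ≠ 0) := by
        ext v; simp [pow_eq_zero_iff]
      rw [hflt]; exact hsupp
    set A : Sym2 V → ℝ := Sym2.lift ⟨fun x y => |gp x - gp y|, fun x y => abs_sub_comm _ _⟩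
      with hA'
    set Bq : Sym2 V → ℝ := Sym2.lift ⟨fun x y => gp x + gp y, fun x y => add_comm _ _⟩
      with hBq'
    have hfac : ∀ ex ∈ G.edgeFinset, absDiffFun (fun v => (gp v)^2) ex = A ex * Bq ex := by
      intro ex _
      induction ex using Sym2.ind with
      | _ x y =>
        simp only [absDiffFun, hA', hBq', Sym2.lift_mk]
        rw [← abs_of_nonneg (add_nonneg (hgp x) (hgp y)), ← abs_mul]
        congr 1; ring
    have hCS : (∑ ex ∈ G.edgeFinset, A ex * Bq ex) ^ 2 ≤
        (∑ ex ∈ G.edgeFinset, (A ex) ^ 2) * (∑ ex ∈ G.edgeFinset, (Bq ex) ^ 2) :=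
      Finset.sum_mul_sq_le_sq_mul_sq _ _ _
    have hAle : ∑ ex ∈ G.edgeFinset, (A ex) ^ 2 ≤ Eg := by
      apply Finset.sum_le_sum
      intro ex _
      induction ex using Sym2.ind with
      | _ x y =>
        simp only [hA', sqDistFun, Sym2.lift_mk, Real.norm_eq_abs]
        exact pow_le_pow_left₀ (abs_nonneg _) (hcontr x y) 2
    have hBle : ∑ ex ∈ G.edgeFinset, (Bq ex) ^ 2 ≤ 2 * ((d:ℝ) * S) := by
      have step : ∑ ex ∈ G.edgeFinset, (Bq ex) ^ 2 ≤
          ∑ ex ∈ G.edgeFinset,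
            2 * (Sym2.lift ⟨fun x y => (gp x)^2 + (gp y)^2, fun x y => add_comm _ _⟩ ex) := by
        apply Finset.sum_le_sum
        intro ex _
        induction ex using Sym2.ind with
        | _ x y =>
          simp only [hBq', Sym2.lift_mk]
          nlinarith [sq_nonneg (gp x - gp y)]
      rw [← Finset.mul_sum] at step
      rw [edge_double_count G (fun v => (gp v)^2)] at step
      have hds : ∑ v, (G.degree v : ℝ) * (gp v)^2 = (d:ℝ) * S := by
        rw [hS, Finset.mul_sum]
        exact Finset.sum_congr rfl fun v _ => by rw [hreg v]
      rw [hds] at step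
      exact step
    have hB2_nonneg : 0 ≤ ∑ ex ∈ G.edgeFinset, (Bq ex) ^ 2 :=
      Finset.sum_nonneg fun ex _ => sq_nonneg _
    have h2 : (c * S)^2 ≤ Eg * (2 * ((d:ℝ) * S)) := by
      have hcs' : c * S ≤ ∑ ex ∈ G.edgeFinset, A ex * Bq ex := by
        rw [← Finset.sum_congr rfl hfac]; exact h1
      have hnn : 0 ≤ c * S := mul_nonneg (le_of_lt hc) hS_nonneg
      calc (c*S)^2 ≤ (∑ ex ∈ G.edgeFinset, A ex * Bq ex)^2 := pow_le_pow_left₀ hnn hcs' 2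
        _ ≤ (∑ ex ∈ G.edgeFinset, (A ex) ^ 2) * (∑ ex ∈ G.edgeFinset, (Bq ex) ^ 2) := hCS
        _ ≤ Eg * (2 * ((d:ℝ) * S)) := mul_le_mul hAle hBle hB2_nonneg hE_nonneg
    rcases eq_or_lt_of_le hS_nonneg with hS0 | hSpos
    · rw [← hS0, mul_zero]
      have : (0:ℝ) ≤ (d:ℝ) := Nat.cast_nonneg d
      nlinarith
    · have h3 : (c^2 * S) * S ≤ (2 * d * Eg) * S := by nlinarith
      exact le_of_mul_le_mul_right h3 hSpos
  set gpos : V → ℝ := fun v => max (g v - m) 0 with hgpos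
  set gneg : V → ℝ := fun v => max (m - g v) 0 with hgneg
  have hpos_supp : (univ.filter fun v => gpos v ≠ 0) ⊆ (univ.filter fun v => m < g v) := by
    intro v hv
    simp only [mem_filter, mem_univ, true_and, hgpos] at hv ⊢
    by_contra hle; push_neg at hle
    exact hv (max_eq_right (by linarith))
  have hneg_supp : (univ.filter fun v => gneg v ≠ 0) ⊆ (univ.filter fun v => g v < m) := by
    intro v hv
    simp only [mem_filter, mem_univ, true_and, hgneg] at hv ⊢
    by_contra hle; push_neg at hle
    exact hv (max_eq_right (by linarith))
  have hcardP : ((univ.filter fun v => gpos v ≠ 0).card : ℝ) ≤ (N : ℝ) / 2 := by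
    refine le_trans ?_ claimA
    exact_mod_cast Finset.card_le_card hpos_supp
  have hcardM : ((univ.filter fun v => gneg v ≠ 0).card : ℝ) ≤ (N : ℝ) / 2 := by
    refine le_trans ?_ claimB
    exact_mod_cast Finset.card_le_card hneg_supp
  have keyP := key gpos (fun v => le_max_right _ _) hcardP
      (fun x y => by
        have h'' := abs_max_sub_max_le_abs (g x - m) (g y - m) 0
        simpa [sub_sub_sub_cancel_right] using h'')
  have keyM := key gneg (fun v => le_max_right _ _) hcardM
      (fun x y => by
        have h' := abs_max_sub_max_le_abs (m - g x) (m - g y) 0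
        have he' : (m - g x) - (m - g y) = g y - g x := by ring
        rw [he'] at h'
        calc |gneg x - gneg y| ≤ |g y - g x| := h'
          _ = |g x - g y| := abs_sub_comm _ _)
  have hdecomp : ∀ v, (g v - m)^2 = (gpos v)^2 + (gneg v)^2 := by
    intro v
    simp only [hgpos, hgneg]
    rcases le_total (g v) m with h' | h'
    · rw [max_eq_right (by linarith), max_eq_left (by linarith)]; ring
    · rw [max_eq_left (by linarith), max_eq_right (by linarith)]; ring
  have hvar : ∑ v, (g v)^2 ≤ ∑ v, (g v - m)^2 := by
    have hexpand : ∑ v, (g v - m)^2 = (∑ v, (g v)^2) - 2*m*(∑ v, g v) + N * m^2 := by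
      have hterm : ∀ v : V, (g v - m)^2 = (g v)^2 - 2*m*(g v) + m^2 := fun v => by ring
      rw [Finset.sum_congr rfl fun v _ => hterm v, Finset.sum_add_distrib,
        Finset.sum_sub_distrib, ← Finset.mul_sum, Finset.sum_const, Finset.card_univ,
        nsmul_eq_mul, ← hN]
    rw [hexpand, hsum]
    have : 0 ≤ (N:ℝ) * m^2 := by positivity
    linarith
  calc c^2 * ∑ v, (g v)^2 ≤ c^2 * ∑ v, (g v - m)^2 :=
        mul_le_mul_of_nonneg_left hvar (by positivity)
    _ = c^2 * ∑ v, (gpos v)^2 + c^2 * ∑ v, (gneg v)^2 := by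
        rw [Finset.sum_congr rfl fun v _ => hdecomp v, Finset.sum_add_distrib]; ring
    _ ≤ 2*d*Eg + 2*d*Eg := add_le_add keyP keyM
    _ = 4 * d * Eg := by ring

/-- Corollary 2 of the paper: for an expander `(X_n)` of degree `d` and conductance
`c > 0` there is a constant `c₀ ≥ 0` such that for every `n` and every map
`f : X_n → ℓ²` that is `1`-Lipschitz with respect to the graph metric and satisfies
`∑_{x∈X_n} f x = 0`, one has `(1/|X_n|) ∑_{x∈X_n} ‖f x‖² ≤ c₀/2`. -/
theorem expander_mean_sq_norm_bounded (d : ℕ) (c : ℝ) (hc : 0 < c) (E : Expander d c) :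
    ∃ c₀ : ℝ, 0 ≤ c₀ ∧ ∀ (n : ℕ) (f : E.V n → lp (fun _ : ℕ => ℝ) 2),
      (∀ x y : E.V n, ‖f x - f y‖ ≤ ((E.G n).dist x y : ℝ)) →
      (∑ x : E.V n, f x) = 0 →
      (Fintype.card (E.V n) : ℝ)⁻¹ * ∑ x : E.V n, ‖f x‖ ^ 2 ≤ c₀ / 2 := by
  classical
  refine ⟨4 * (d:ℝ)^2 / c^2, by positivity, ?_⟩
  intro n f hLip hsum
  set G := E.G n with hG
  set N := Fintype.card (E.V n) with hN
  have hreg : ∀ v, G.degree v = d := by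
    intro v
    have h := E.regular n v
    rw [SimpleGraph.degree, SimpleGraph.neighborFinset_eq_filter]
    convert h using 2
    unfold gdeg; congr
  have hexp := E.expansion n
  have hpoin : ∀ k : ℕ, c^2 * ∑ v, (f v k)^2 ≤
      4 * d * ∑ ex ∈ G.edgeFinset, sqDistFun (fun v => f v k) ex := by
    intro k
    exact l2_poincare G hc hreg hexp (fun v => f v k) (lp2_sum_coord f hsum k)
  have hsm1 : ∀ v, Summable fun k => (f v k)^2 := fun v => lp2_summable_sq (f v)
  have hsm_edge : ∀ ex ∈ G.edgeFinset,
      Summable fun k => sqDistFun (fun v => f v k) ex := by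
    intro ex _
    induction ex using Sym2.ind with
    | _ x y =>
      refine (lp2_summable_sq (f x - f y)).congr fun k => ?_
      simp [sqDistFun, lp.coeFn_sub, Real.norm_eq_abs, sq_abs]
  have swap1 : ∑ v, ‖f v‖^2 = ∑' k, ∑ v, (f v k)^2 := by
    calc ∑ v, ‖f v‖^2 = ∑ v, ∑' k, (f v k)^2 :=
          Finset.sum_congr rfl fun v _ => lp2_norm_sq (f v)
      _ = ∑' k, ∑ v, (f v k)^2 := (Summable.tsum_finsetSum fun v _ => hsm1 v).symm
  have swap2 : ∑ ex ∈ G.edgeFinset, sqDistFun f ex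
      = ∑' k, ∑ ex ∈ G.edgeFinset, sqDistFun (fun v => f v k) ex := by
    calc ∑ ex ∈ G.edgeFinset, sqDistFun f ex
        = ∑ ex ∈ G.edgeFinset, ∑' k, sqDistFun (fun v => f v k) ex := by
          refine Finset.sum_congr rfl fun ex hex => ?_
          induction ex using Sym2.ind with
          | _ x y =>
            simp only [sqDistFun, Sym2.lift_mk]
            rw [lp2_norm_sq (f x - f y)]
            refine tsum_congr fun k => ?_
            simp [lp.coeFn_sub, Real.norm_eq_abs, sq_abs]
      _ = ∑' k, ∑ ex ∈ G.edgeFinset, sqDistFun (fun v => f v k) ex :=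
          (Summable.tsum_finsetSum hsm_edge).symm
  have hT1sum : Summable fun k => ∑ v, (f v k)^2 :=
    summable_finset_sum' fun v _ => hsm1 v
  have hT2sum : Summable fun k => ∑ ex ∈ G.edgeFinset, sqDistFun (fun v => f v k) ex :=
    summable_finset_sum' hsm_edge
  have main : c^2 * ∑ v, ‖f v‖^2 ≤ 4*d * ∑ ex ∈ G.edgeFinset, sqDistFun f ex := by
    rw [swap1, swap2, ← tsum_mul_left, ← tsum_mul_left]
    exact Summable.tsum_le_tsum (fun k => hpoin k) (hT1sum.mul_left _) (hT2sum.mul_left _)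
  have hedge1 : ∀ ex ∈ G.edgeFinset, sqDistFun f ex ≤ 1 := by
    intro ex hex
    induction ex using Sym2.ind with
    | _ x y =>
      have hadj : G.Adj x y := SimpleGraph.mem_edgeFinset.mp hex
      have hd1 : G.dist x y = 1 := SimpleGraph.dist_eq_one_iff_adj.mpr hadj
      have hl := hLip x y
      rw [hd1] at hl
      norm_num at hl
      simp only [sqDistFun, Sym2.lift_mk]
      nlinarith [norm_nonneg (f x - f y)]
  have hcount : (G.edgeFinset.card : ℝ) * 2 = (d:ℝ) * N := by
    have h1 := G.sum_degrees_eq_twice_card_edges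
    have h2 : ∑ v, G.degree v = d * N := by
      rw [Finset.sum_congr rfl fun v (_ : v ∈ Finset.univ) => hreg v, Finset.sum_const,
        smul_eq_mul, Finset.card_univ, ← hN, Nat.mul_comm]
    have h3 : 2 * G.edgeFinset.card = d * N := by rw [← h1, h2]
    have h4 : (2:ℝ) * G.edgeFinset.card = (d:ℝ) * N := by exact_mod_cast h3
    linarith
  have hEdgeBound : ∑ ex ∈ G.edgeFinset, sqDistFun f ex ≤ (d:ℝ) * N / 2 := by
    calc ∑ ex ∈ G.edgeFinset, sqDistFun f ex ≤ ∑ _ex ∈ G.edgeFinset, (1:ℝ) :=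
          Finset.sum_le_sum hedge1
      _ = (G.edgeFinset.card : ℝ) := by simp
      _ ≤ (d:ℝ) * N / 2 := by linarith
  have hnn : 0 ≤ ∑ v, ‖f v‖^2 := Finset.sum_nonneg fun v _ => sq_nonneg _
  have final : c^2 * ∑ v, ‖f v‖^2 ≤ 2 * (d:ℝ)^2 * N := by
    calc c^2 * ∑ v, ‖f v‖^2 ≤ 4*d * ((d:ℝ) * N / 2) := by
          refine le_trans main (mul_le_mul_of_nonneg_left hEdgeBound (by positivity))
      _ = 2 * (d:ℝ)^2 * N := by ring
  rcases Nat.eq_zero_or_pos N with h0 | hpos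
  · rw [h0]
    norm_num
    positivity
  · have hNpos : (0:ℝ) < N := by exact_mod_cast hpos
    have hstep : ∑ v, ‖f v‖^2 ≤ 2 * (d:ℝ)^2 * N / c^2 := by
      rw [le_div_iff₀ (by positivity : (0:ℝ) < c^2)]
      nlinarith
    calc (N:ℝ)⁻¹ * ∑ v, ‖f v‖^2 ≤ (N:ℝ)⁻¹ * (2 * (d:ℝ)^2 * N / c^2) :=
          mul_le_mul_of_nonneg_left hstep (by positivity)
      _ = (4 * (d:ℝ)^2 / c^2) / 2 := by field_simp; ring
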